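/- For every integer n ≥ 2, the symmetric group S_n has a basis; in fact the sequence of cycles ((1,2), (1,2,3), …, (1,2,…,n)) is a basis for S_n, i.e., every permutation σ ∈ S_n is uniquely expressible as σ = (1,2)^{a_2} (1,2,3)^{a_3} ··· (1,2,…,n)^{a_n} with a_k ∈ {0,…,k−1}. -/

import Mathlib

/-- A sequence `b : Fin n → G` of non-identity elements is a *basis* for the group `G`
if every `g ∈ G` is uniquely of the form `b 0 ^ a 0 * ⋯ * b (n-1) ^ a (n-1)`
with `a i ∈ {0, …, orderOf (b i) - 1}`. -/
def IsGroupBasis {G : Type*} [Group G] {n : ℕ} (b : Fin n → G) : Prop :=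
  (∀ i, b i ≠ 1) ∧
    Function.Bijective (fun a : ∀ i, Fin (orderOf (b i)) =>
      (List.ofFn fun i => b i ^ ((a i : ℕ))).prod)

/-- `G` has a basis. -/
def HasGroupBasis (G : Type*) [Group G] : Prop :=
  ∃ (n : ℕ) (b : Fin n → G), IsGroupBasis b

private def cyc (n i : ℕ) : Equiv.Perm (Fin n) :=
  if h : i + 2 ≤ n then (((List.finRange (i + 2)).map (Fin.castLE h)).formPerm) else 1

private lemma cycList_nodup {n k : ℕ} (h : k ≤ n) :
    ((List.finRange k).map (Fin.castLE h)).Nodup :=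
  (List.nodup_finRange k).map (Fin.castLE_injective h)

private lemma cycList_getElem {n k : ℕ} (h : k ≤ n) (i : ℕ)
    (hi : i < ((List.finRange k).map (Fin.castLE h)).length) :
    ((List.finRange k).map (Fin.castLE h))[i] =
      ⟨i, lt_of_lt_of_le (by simpa using hi) h⟩ := by
  apply Fin.ext
  simp

private lemma cycList_not_mem {n k : ℕ} (h : k ≤ n) {x : Fin n} (hx : k ≤ x.1) :
    x ∉ (List.finRange k).map (Fin.castLE h) := by
  simp only [List.mem_map]
  rintro ⟨y, -, rfl⟩
  exact absurd y.isLt (not_lt.2 (by simpa using hx))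

private lemma cyc_pow_fix {n i : ℕ} (a : ℕ) {x : Fin n} (hx : i + 2 ≤ x.1) :
    (cyc n i ^ a) x = x := by
  have h1 : cyc n i x = x := by
    unfold cyc
    split
    · exact List.formPerm_apply_of_notMem (cycList_not_mem _ hx)
    · rfl
  induction a with
  | zero => rfl
  | succ a ih => rw [pow_succ, Equiv.Perm.mul_apply, h1, ih]

private lemma prod_fix {α : Type*} (l : List (Equiv.Perm α)) (x : α)
    (h : ∀ g ∈ l, g x = x) : l.prod x = x := by
  induction l with
  | nil => rfl
  | cons g l ih =>
    rw [List.prod_cons, Equiv.Perm.mul_apply,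
      ih (fun g hg => h g (List.mem_cons_of_mem _ hg)), h g List.mem_cons_self]

private lemma cyc_orderOf {n i : ℕ} (h : i + 2 ≤ n) : orderOf (cyc n i) = i + 2 := by
  unfold cyc
  rw [dif_pos h]
  set l := (List.finRange (i + 2)).map (Fin.castLE h) with hl
  have hnd : l.Nodup := cycList_nodup h
  have hlen : l.length = i + 2 := by simp [hl]
  have hcyc : l.formPerm.IsCycle := List.isCycle_formPerm hnd (by omega)
  rw [hcyc.orderOf, List.support_formPerm_of_nodup l hnd ?_,
    List.toFinset_card_of_nodup hnd, hlen]
  intro x hx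
  have := congrArg List.length hx
  simp [hlen] at this

private lemma cyc_prod_inj (n : ℕ) : ∀ (K : ℕ), K + 1 ≤ n → ∀ a a' : ℕ → ℕ,
    (∀ i < K, a i < i + 2) → (∀ i < K, a' i < i + 2) →
    ((List.range K).map fun i => cyc n i ^ a i).prod =
      ((List.range K).map fun i => cyc n i ^ a' i).prod →
    ∀ i < K, a i = a' i := by
  intro K
  induction K with
  | zero => intro _ _ _ _ _ _ i hi; omega
  | succ K ih =>
    intro hK a a' ha ha' heq
    set p : Fin n := ⟨K + 1, by omega⟩ with hp
    rw [List.range_succ, List.map_append, List.prod_append, List.map_append,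
      List.prod_append] at heq
    simp only [List.map_cons, List.map_nil, List.prod_cons, List.prod_nil, mul_one] at heq
    set P := ((List.range K).map fun i => cyc n i ^ a i).prod with hP
    set P' := ((List.range K).map fun i => cyc n i ^ a' i).prod with hP'
    have fixlem : ∀ b : ℕ → ℕ, (((List.range K).map fun i => cyc n i ^ b i).prod) p = p := by
      intro b
      apply prod_fix
      intro g hg
      simp only [List.mem_map, List.mem_range] at hg
      obtain ⟨j, hj, rfl⟩ := hg
      exact cyc_pow_fix _ (by simp only [hp]; omega)
    have hPfix : P p = p := fixlem a
    have hP'fix : P' p = p := fixlem a'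
    have hn2 : K + 2 ≤ n := by omega
    have hcl : cyc n K = ((List.finRange (K + 2)).map (Fin.castLE hn2)).formPerm := dif_pos hn2
    have hnd := cycList_nodup hn2
    have hlen : ((List.finRange (K + 2)).map (Fin.castLE hn2)).length = K + 2 := by simp
    have hfixp : ∀ d, d < K + 2 → (cyc n K ^ d) p = p → d = 0 := by
      intro d hd hdp
      by_contra h0
      have hKl : K + 1 < ((List.finRange (K + 2)).map (Fin.castLE hn2)).length := by
        simp
      have hpl : p = ((List.finRange (K + 2)).map (Fin.castLE hn2))[K + 1] := by
        rw [cycList_getElem]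
      rw [hcl, hpl, List.formPerm_pow_apply_getElem _ hnd, cycList_getElem,
        cycList_getElem] at hdp
      have hval := congrArg Fin.val hdp
      simp only [List.length_map, List.length_finRange] at hval
      have hmod : (K + 1 + d) % (K + 2) = d - 1 := by
        rw [show K + 1 + d = (K + 2) + (d - 1) by omega, Nat.add_mod_left,
          Nat.mod_eq_of_lt (by omega)]
      omega
    have key : ∀ b b' : ℕ → ℕ, b' K < K + 2 →
        (((List.range K).map fun i => cyc n i ^ b i).prod) * cyc n K ^ b K =
          (((List.range K).map fun i => cyc n i ^ b' i).prod) * cyc n K ^ b' K →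
        b K ≤ b' K → b K = b' K := by
      intro b b' hb' hbeq hle
      set Q := ((List.range K).map fun i => cyc n i ^ b i).prod with hQ
      set Q' := ((List.range K).map fun i => cyc n i ^ b' i).prod with hQ'
      have h2 : cyc n K ^ b' K = cyc n K ^ (b' K - b K) * cyc n K ^ b K := by
        rw [← pow_add]; congr 1; omega
      rw [h2, ← mul_assoc] at hbeq
      have h3 := mul_right_cancel hbeq
      have h4 : cyc n K ^ (b' K - b K) = Q'⁻¹ * Q := by
        rw [h3, ← mul_assoc, inv_mul_cancel, one_mul]
      have hQfix : Q p = p := fixlem b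
      have hQ'fix : Q'⁻¹ p = p := by
        rw [Equiv.Perm.inv_eq_iff_eq]; exact (fixlem b').symm
      have hdp : (cyc n K ^ (b' K - b K)) p = p := by
        rw [h4, Equiv.Perm.mul_apply, hQfix, hQ'fix]
      have := hfixp _ (by omega) hdp
      omega
    have htt : a K = a' K := by
      rcases le_total (a K) (a' K) with hle | hle
      · exact key a a' (ha' K (by omega)) heq hle
      · exact (key a' a (ha K (by omega)) heq.symm hle).symm
    have hPP' : P = P' := by
      rw [htt] at heq
      exact mul_right_cancel heq
    intro i hi
    rcases Nat.lt_succ_iff_lt_or_eq.1 hi with h | rfl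
    · exact ih (by omega) a a' (fun j hj => ha j (by omega)) (fun j hj => ha' j (by omega))
        hPP' i h
    · exact htt

private lemma prod_vals (m : ℕ) : ∏ i : Fin m, (i.1 + 2) = Nat.factorial (m + 1) := by
  induction m with
  | zero => simp
  | succ m ih =>
    rw [Fin.prod_univ_castSucc]
    simp only [Fin.coe_castSucc, Fin.val_last, ih, Nat.factorial_succ]
    ring

/-- For `n ≥ 2`, the sequence of cycles `((0 1), (0 1 2), …, (0 1 ⋯ n-1))` is a
basis for the symmetric group on `Fin n`: every permutation is uniquely a product
`(0 1)^{a_2} (0 1 2)^{a_3} ⋯ (0 1 ⋯ n-1)^{a_n}` with `a_k ∈ {0, …, k-1}`. -/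
theorem isGroupBasis_cycles_perm (n : ℕ) (hn : 2 ≤ n) :
    IsGroupBasis (fun i : Fin (n - 1) =>
      (((List.finRange (i.1 + 2)).map
        (Fin.castLE (by have := i.isLt; omega))).formPerm : Equiv.Perm (Fin n))) := by
  have hbc : ∀ (i : Fin (n - 1)),
      (((List.finRange (i.1 + 2)).map
        (Fin.castLE (by have := i.isLt; omega))).formPerm : Equiv.Perm (Fin n))
        = cyc n i.1 := by
    intro i
    have h2 : i.1 + 2 ≤ n := by have := i.isLt; omega
    simp only [cyc, dif_pos h2]
  have horder : ∀ (i : Fin (n - 1)),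
      orderOf ((((List.finRange (i.1 + 2)).map
        (Fin.castLE (by have := i.isLt; omega))).formPerm : Equiv.Perm (Fin n)))
        = i.1 + 2 := by
    intro i
    rw [hbc i]
    exact cyc_orderOf (by have := i.isLt; omega)
  constructor
  · intro i h1
    have h2 : cyc n i.1 = 1 := (hbc i).symm.trans h1
    have h3 := cyc_orderOf (n := n) (i := i.1) (by have := i.isLt; omega)
    rw [h2, orderOf_one] at h3
    omega
  · rw [Fintype.bijective_iff_injective_and_card]
    constructor
    · intro a a' heq
      simp only at heq
      have conv1 : ∀ (c : ∀ i : Fin (n - 1),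
          Fin (orderOf ((((List.finRange (i.1 + 2)).map
            (Fin.castLE (by have := i.isLt; omega))).formPerm : Equiv.Perm (Fin n))))),
          (List.ofFn fun i => (((List.finRange (i.1 + 2)).map
            (Fin.castLE (by have := i.isLt; omega))).formPerm : Equiv.Perm (Fin n))
              ^ ((c i : ℕ))).prod =
          ((List.range (n - 1)).map fun j =>
            cyc n j ^ (if h : j < n - 1 then ((c ⟨j, h⟩ : ℕ)) else 0)).prod := by
        intro c
        rw [List.ofFn_eq_map,
          show (List.range (n - 1)) = (List.finRange (n - 1)).map Fin.val from
            (by apply List.ext_getElem <;> simp), List.map_map]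
        congr 1
        apply List.map_congr_left
        intro i _
        simp only [Function.comp_apply]
        rw [dif_pos i.isLt]
        exact congrArg (fun g => g ^ ((c i : ℕ))) (hbc i)
      have hbound : ∀ (c : ∀ i : Fin (n - 1),
          Fin (orderOf ((((List.finRange (i.1 + 2)).map
            (Fin.castLE (by have := i.isLt; omega))).formPerm : Equiv.Perm (Fin n))))),
          ∀ j < n - 1, (if h : j < n - 1 then ((c ⟨j, h⟩ : ℕ)) else 0) < j + 2 := by
        intro c j hj
        rw [dif_pos hj]
        exact lt_of_lt_of_eq (c ⟨j, hj⟩).isLt (horder ⟨j, hj⟩)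
      have h2 := cyc_prod_inj n (n - 1) (by omega) _ _ (hbound a) (hbound a')
        (by rw [← conv1 a, ← conv1 a', heq])
      funext i
      have h3 := h2 i.1 i.isLt
      rw [dif_pos i.isLt, dif_pos i.isLt] at h3
      exact Fin.ext h3
    · rw [Fintype.card_pi]
      simp only [Fintype.card_fin]
      rw [Finset.prod_congr rfl (fun i _ => horder i), prod_vals, Fintype.card_perm,
        Fintype.card_fin, show n - 1 + 1 = n by omega]
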